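/- arXiv:2110.09752 — 2 statements merged into one kernel-verified Lean document; each statement's English description precedes it below -/
import Mathlib

section
/- Let n ≥ 1 and let f ∈ 𝓢(ℝⁿ, ℂ) be a Schwartz function satisfying H₀ f = −(n/2)·f, i.e. (1/2) Σ_{j=1}^n (∂²f/∂x_j²(x) − x_j² f(x)) = −(n/2)·f(x) for all x. Then f(x) = f(0)·e^(−|x|²/2) for all x ∈ ℝⁿ; that is, the lowest eigenspace of the Hamilton operator in the Schwartz space is spanned by the Gaussian. -/
open MeasureTheory

/-- One-dimensional Hermite function `h_ℓ(t) = e^{t²/2} (d/dt)^ℓ (e^{-t²})`. -/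
noncomputable def hermiteFun (ℓ : ℕ) (t : ℝ) : ℝ :=
  Real.exp (t ^ 2 / 2) * iteratedDeriv ℓ (fun s => Real.exp (-s ^ 2)) t

/-- First partial derivative `∂f/∂x_j` along the `j`-th coordinate. -/
noncomputable def partialDeriv1 (n : ℕ) (j : Fin n) (f : (Fin n → ℝ) → ℂ)
    (x : Fin n → ℝ) : ℂ :=
  deriv (fun t => f (Function.update x j t)) (x j)

/-- Second partial derivative `∂²f/∂x_j²` along the `j`-th coordinate. -/
noncomputable def partialDeriv2 (n : ℕ) (j : Fin n) (f : (Fin n → ℝ) → ℂ)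
    (x : Fin n → ℝ) : ℂ :=
  iteratedDeriv 2 (fun t => f (Function.update x j t)) (x j)

/-- Symplectic Clifford multiplication `σ(v)f` for `v = (v′, v″) ∈ ℝ^{2n}`:
`(σ(v)f)(x) = i (∑ⱼ v′ⱼ xⱼ) f(x) + ∑ⱼ v″ⱼ ∂f/∂xⱼ(x)`. -/
noncomputable def sclMul (n : ℕ) (v : (Fin n → ℝ) × (Fin n → ℝ)) (f : (Fin n → ℝ) → ℂ)
    (x : Fin n → ℝ) : ℂ :=
  Complex.I * (↑(∑ j, v.1 j * x j) : ℂ) * f x + ∑ j, (↑(v.2 j) : ℂ) * partialDeriv1 n j f x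

/-- The standard symplectic form `ω₀` on `ℝ^{2n}`. -/
def omega0 (n : ℕ) (v w : (Fin n → ℝ) × (Fin n → ℝ)) : ℝ :=
  ∑ j, (v.1 j * w.2 j - v.2 j * w.1 j)

/-- The Hamilton operator `H₀ f = (1/2) ∑ⱼ (∂²f/∂xⱼ² − xⱼ² f)`. -/
noncomputable def hamOp (n : ℕ) (f : (Fin n → ℝ) → ℂ) (x : Fin n → ℝ) : ℂ :=
  (1 / 2 : ℂ) * ∑ j, (partialDeriv2 n j f x - (↑(x j) : ℂ) ^ 2 * f x)

/-- The `n`-dimensional Hermite function `h_β(x) = h_{β₁}(x₁) ⋯ h_{βₙ}(xₙ)`. -/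
noncomputable def hermiteMulti (n : ℕ) (β : Fin n → ℕ) (x : Fin n → ℝ) : ℝ :=
  ∏ j, hermiteFun (β j) (x j)

/-- The standard complex structure `J₀(v′, v″) = (−v″, v′)` on `ℝ^{2n}`. -/
def J0 (n : ℕ) (v : (Fin n → ℝ) × (Fin n → ℝ)) : (Fin n → ℝ) × (Fin n → ℝ) :=
  (fun j => -v.2 j, v.1)

open SchwartzMap Filter Complex

variable {E : Type*} [NormedAddCommGroup E] [NormedSpace ℝ E]

lemma schwartz_temperate (g : SchwartzMap E ℂ) : Function.HasTemperateGrowth ⇑g := by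
  refine ⟨g.smooth ⊤, fun n => ⟨0, SchwartzMap.seminorm ℝ 0 n g, fun x => ?_⟩⟩
  simpa using SchwartzMap.norm_iteratedFDeriv_le_seminorm ℝ g n x

lemma schwartz_line_bound (g : SchwartzMap E ℂ) (c : ℝ → E)
    (hb : ∀ t, |t| ≤ ‖c t‖) (t : ℝ) : ‖g (c t)‖ ≤
      (SchwartzMap.seminorm ℝ 0 0 g + SchwartzMap.seminorm ℝ 2 0 g) * (1 + t ^ 2)⁻¹ := by
  have h1 : ‖g (c t)‖ ≤ SchwartzMap.seminorm ℝ 0 0 g := g.norm_le_seminorm ℝ (c t)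
  have h2 : ‖c t‖ ^ 2 * ‖g (c t)‖ ≤ SchwartzMap.seminorm ℝ 2 0 g :=
    g.norm_pow_mul_le_seminorm ℝ 2 (c t)
  have h4 : t ^ 2 ≤ ‖c t‖ ^ 2 := by
    calc t ^ 2 = |t| ^ 2 := (_root_.sq_abs t).symm
    _ ≤ ‖c t‖ ^ 2 := pow_le_pow_left₀ (abs_nonneg t) (hb t) 2
  have h3 : t ^ 2 * ‖g (c t)‖ ≤ ‖c t‖ ^ 2 * ‖g (c t)‖ :=
    mul_le_mul_of_nonneg_right h4 (norm_nonneg _)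
  have hpos : (0:ℝ) < 1 + t ^ 2 := by positivity
  rw [mul_comm, inv_mul_eq_div, le_div_iff₀ hpos]
  nlinarith [norm_nonneg (g (c t))]

lemma schwartz_comp_line_integrable (g : SchwartzMap E ℂ) (c : ℝ → E) (hc : Continuous c)
    (hb : ∀ t, |t| ≤ ‖c t‖) : Integrable (fun t => g (c t)) := by
  refine Integrable.mono' (g := fun t : ℝ =>
      (SchwartzMap.seminorm ℝ 0 0 g + SchwartzMap.seminorm ℝ 2 0 g) * (1 + t ^ 2)⁻¹)
    (integrable_inv_one_add_sq.const_mul _) ((g.continuous.comp hc).aestronglyMeasurable)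
    (Eventually.of_forall (schwartz_line_bound g c hb))

lemma schwartz_comp_line_tendsto (g : SchwartzMap E ℂ) (c : ℝ → E)
    (hb : ∀ t, |t| ≤ ‖c t‖) (l : Filter ℝ) (hl : Tendsto (fun t : ℝ => (1 + t ^ 2)⁻¹) l (nhds 0)) :
    Tendsto (fun t => g (c t)) l (nhds 0) := by
  apply squeeze_zero_norm (schwartz_line_bound g c hb)
  simpa using hl.const_mul (SchwartzMap.seminorm ℝ 0 0 g + SchwartzMap.seminorm ℝ 2 0 g)

lemma inv_one_add_sq_tendsto_atTop : Tendsto (fun t : ℝ => (1 + t ^ 2)⁻¹) atTop (nhds 0) := by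
  apply Tendsto.inv_tendsto_atTop
  exact tendsto_atTop_add_const_left _ 1 (tendsto_pow_atTop two_ne_zero)

lemma inv_one_add_sq_tendsto_atBot : Tendsto (fun t : ℝ => (1 + t ^ 2)⁻¹) atBot (nhds 0) := by
  have h := inv_one_add_sq_tendsto_atTop.comp tendsto_neg_atBot_atTop
  convert h using 2 with t
  simp [Function.comp]

lemma insertNth_eq_line (m : ℕ) (j : Fin (m+1)) (z : Fin m → ℝ) :
    (fun s : ℝ => j.insertNth s z) =
      (fun s : ℝ => j.insertNth 0 z + s • (Pi.single j 1 : Fin (m+1) → ℝ)) := by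
  funext s
  refine funext (Fin.succAboveCases j ?_ ?_)
  · simp
  · intro i
    simp [Fin.insertNth_apply_succAbove, Pi.single_apply, (Fin.succAbove_ne j i)]

lemma hasDerivAt_insertNth (m : ℕ) (j : Fin (m+1)) (z : Fin m → ℝ) (t : ℝ) :
    HasDerivAt (fun s : ℝ => (j.insertNth s z : Fin (m+1) → ℝ))
      (Pi.single j 1 : Fin (m+1) → ℝ) t := by
  rw [insertNth_eq_line]
  simpa using ((hasDerivAt_id t).smul_const (Pi.single j 1 : Fin (m+1) → ℝ)).const_add
    (j.insertNth 0 z)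

lemma abs_le_norm_insertNth (m : ℕ) (j : Fin (m+1)) (z : Fin m → ℝ) (t : ℝ) :
    |t| ≤ ‖(j.insertNth t z : Fin (m+1) → ℝ)‖ := by
  have := norm_le_pi_norm (j.insertNth t z : Fin (m+1) → ℝ) j
  simpa using this

noncomputable def SchwartzMap.pderivCLM (𝕜 : Type*) [RCLike 𝕜] {E F : Type*}
    [NormedAddCommGroup E] [NormedSpace ℝ E] [NormedAddCommGroup F] [NormedSpace ℝ F]
    [NormedSpace 𝕜 F] (m : E) : SchwartzMap E F →L[𝕜] SchwartzMap E F :=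
  LineDeriv.lineDerivOpCLM 𝕜 (SchwartzMap E F) m

@[simp] lemma SchwartzMap.pderivCLM_apply (𝕜 : Type*) [RCLike 𝕜] {E F : Type*}
    [NormedAddCommGroup E] [NormedSpace ℝ E] [NormedAddCommGroup F] [NormedSpace ℝ F]
    [NormedSpace 𝕜 F] (m : E) (f : SchwartzMap E F) (x : E) :
    SchwartzMap.pderivCLM 𝕜 m f x = fderiv ℝ f x m := rfl

lemma integral_pderiv_single (m : ℕ) (j : Fin (m+1)) (g : SchwartzMap (Fin (m+1) → ℝ) ℂ) :
    ∫ x : Fin (m+1) → ℝ, SchwartzMap.pderivCLM ℝ (Pi.single j 1) g x = 0 := by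
  set G := SchwartzMap.pderivCLM ℝ (Pi.single j 1) g with hG
  have hline : ∀ (z : Fin m → ℝ) (t : ℝ),
      HasDerivAt (fun s => g (j.insertNth s z)) (G (j.insertNth t z)) t := by
    intro z t
    have h1 := (g.differentiableAt.hasFDerivAt (x := j.insertNth t z)).comp_hasDerivAt t
      (hasDerivAt_insertNth m j z t)
    exact h1
  have hinner : ∀ z : Fin m → ℝ, ∫ t : ℝ, G (j.insertNth t z) = 0 := by
    intro z
    have hint : Integrable (fun t : ℝ => G (j.insertNth t z)) :=
      schwartz_comp_line_integrable G _
        (continuous_iff_continuousAt.2 fun t => (hasDerivAt_insertNth m j z t).continuousAt)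
        (abs_le_norm_insertNth m j z)
    have h0b : Tendsto (fun t : ℝ => g (j.insertNth t z)) atBot (nhds 0) :=
      schwartz_comp_line_tendsto g _ (abs_le_norm_insertNth m j z) _ inv_one_add_sq_tendsto_atBot
    have h0t : Tendsto (fun t : ℝ => g (j.insertNth t z)) atTop (nhds 0) :=
      schwartz_comp_line_tendsto g _ (abs_le_norm_insertNth m j z) _ inv_one_add_sq_tendsto_atTop
    simpa using integral_of_hasDerivAt_of_tendsto (hline z) hint h0b h0t
  -- now Fubini
  set ψ := MeasurableEquiv.piFinSuccAbove (fun _ : Fin (m+1) => ℝ) j with hψ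
  have hmp : MeasurePreserving ψ.symm := (volume_preserving_piFinSuccAbove _ j).symm
  have hcomp : ∫ p : ℝ × (Fin m → ℝ), G (ψ.symm p) = ∫ x, G x :=
    hmp.integral_comp' _
  have hsymm : ∀ p : ℝ × (Fin m → ℝ), ψ.symm p = j.insertNth p.1 p.2 := fun p => rfl
  rw [← hcomp]
  have hGint : Integrable (fun p : ℝ × (Fin m → ℝ) => G (ψ.symm p)) :=
    (hmp.integrable_comp_emb ψ.symm.measurableEmbedding).2 G.integrable
  rw [show (volume : Measure (ℝ × (Fin m → ℝ))) = (volume : Measure ℝ).prod volume from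
    Measure.volume_eq_prod _ _] at hGint ⊢
  rw [integral_prod_symm _ hGint]
  simp only [hsymm]
  rw [show (∫ z : Fin m → ℝ, ∫ t : ℝ, G (j.insertNth t z)) =
      ∫ z : Fin m → ℝ, (0 : ℂ) from integral_congr_ae (Eventually.of_forall hinner)]
  simp

lemma update_eq_line (n : ℕ) (x : Fin n → ℝ) (j : Fin n) :
    (fun t : ℝ => Function.update x j t)
      = fun t : ℝ => x + (t - x j) • (Pi.single j 1 : Fin n → ℝ) := by
  funext t i
  rcases eq_or_ne i j with rfl | hij
  · simp
  · simp [Function.update_of_ne hij, Pi.single_eq_of_ne hij]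

lemma hasDerivAt_update' (n : ℕ) (x : Fin n → ℝ) (j : Fin n) (t : ℝ) :
    HasDerivAt (fun s : ℝ => Function.update x j s) (Pi.single j 1 : Fin n → ℝ) t := by
  rw [update_eq_line]
  simpa using (((hasDerivAt_id t).sub_const (x j)).smul_const
    (Pi.single j 1 : Fin n → ℝ)).const_add x

lemma hasDerivAt_schwartz_update (n : ℕ) (j : Fin n) (g : SchwartzMap (Fin n → ℝ) ℂ)
    (x : Fin n → ℝ) (t : ℝ) :
    HasDerivAt (fun s : ℝ => g (Function.update x j s))
      (SchwartzMap.pderivCLM ℝ (Pi.single j 1) g (Function.update x j t)) t := by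
  have h := (g.differentiableAt.hasFDerivAt
      (x := Function.update x j t)).comp_hasDerivAt t (hasDerivAt_update' n x j t)
  simpa [Function.comp_def] using h

lemma partialDeriv1_eq (n : ℕ) (j : Fin n) (g : SchwartzMap (Fin n → ℝ) ℂ) (x : Fin n → ℝ) :
    partialDeriv1 n j ⇑g x = SchwartzMap.pderivCLM ℝ (Pi.single j 1) g x := by
  have h := (hasDerivAt_schwartz_update n j g x (x j)).deriv
  rw [Function.update_eq_self] at h
  exact h

lemma partialDeriv2_eq (n : ℕ) (j : Fin n) (g : SchwartzMap (Fin n → ℝ) ℂ) (x : Fin n → ℝ) :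
    partialDeriv2 n j ⇑g x
      = SchwartzMap.pderivCLM ℝ (Pi.single j 1) (SchwartzMap.pderivCLM ℝ (Pi.single j 1) g) x := by
  rw [partialDeriv2, iteratedDeriv_succ, iteratedDeriv_one]
  have hfun : deriv (fun t : ℝ => g (Function.update x j t))
      = fun t : ℝ => SchwartzMap.pderivCLM ℝ (Pi.single j 1) g (Function.update x j t) := by
    funext t
    exact (hasDerivAt_schwartz_update n j g x t).deriv
  rw [hfun]
  have h := (hasDerivAt_schwartz_update n j (SchwartzMap.pderivCLM ℝ (Pi.single j 1) g) x
    (x j)).deriv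
  rw [Function.update_eq_self] at h
  exact h

noncomputable def mulConjCLM : ℂ →L[ℝ] ℂ →L[ℝ] ℂ :=
  (ContinuousLinearMap.mul ℝ ℂ).bilinearComp (ContinuousLinearMap.id ℝ ℂ)
    (Complex.conjCLE : ℂ ≃L[ℝ] ℂ).toContinuousLinearMap

@[simp] lemma mulConjCLM_apply (z w : ℂ) : mulConjCLM z w = z * (starRingEnd ℂ) w := rfl

lemma coordC_temperate (n : ℕ) (j : Fin n) :
    Function.HasTemperateGrowth (fun x : Fin n → ℝ => ((x j : ℝ) : ℂ)) :=
  (Complex.ofRealCLM.comp (ContinuousLinearMap.proj (R := ℝ) (φ := fun _ : Fin n => ℝ)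
    j)).hasTemperateGrowth

lemma bilin_apply (n : ℕ) (p q : SchwartzMap (Fin n → ℝ) ℂ) (x : Fin n → ℝ) :
    SchwartzMap.bilinLeftCLM mulConjCLM (schwartz_temperate q) p x
      = p x * (starRingEnd ℂ) (q x) := rfl

lemma bilinX_apply (n : ℕ) (j : Fin n) (p : SchwartzMap (Fin n → ℝ) ℂ) (x : Fin n → ℝ) :
    SchwartzMap.bilinLeftCLM (ContinuousLinearMap.mul ℝ ℂ) (coordC_temperate n j) p x
      = p x * ((x j : ℝ) : ℂ) := rfl

lemma Dj_mulconj (n : ℕ) (j : Fin n) (p q : SchwartzMap (Fin n → ℝ) ℂ) (x : Fin n → ℝ) :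
    SchwartzMap.pderivCLM ℝ (Pi.single j 1)
        (SchwartzMap.bilinLeftCLM mulConjCLM (schwartz_temperate q) p) x
      = SchwartzMap.pderivCLM ℝ (Pi.single j 1) p x * (starRingEnd ℂ) (q x)
        + p x * (starRingEnd ℂ) (SchwartzMap.pderivCLM ℝ (Pi.single j 1) q x) := by
  rw [← partialDeriv1_eq, partialDeriv1]
  have hp := hasDerivAt_schwartz_update n j p x (x j)
  have hq := hasDerivAt_schwartz_update n j q x (x j)
  have hqc : HasDerivAt (fun t : ℝ => (starRingEnd ℂ) (q (Function.update x j t)))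
      ((starRingEnd ℂ) (SchwartzMap.pderivCLM ℝ (Pi.single j 1) q (Function.update x j (x j))))
      (x j) := by
    have := (Complex.conjCLE.toContinuousLinearMap.hasFDerivAt).comp_hasDerivAt (x j) hq
    simpa [Function.comp_def] using this
  have hprod := hp.fun_mul hqc
  have heq : (fun t : ℝ =>
      SchwartzMap.bilinLeftCLM mulConjCLM (schwartz_temperate q) p (Function.update x j t))
      = fun t : ℝ => p (Function.update x j t)
          * (starRingEnd ℂ) (q (Function.update x j t)) := rfl
  rw [heq, hprod.deriv, Function.update_eq_self]

lemma Dj_mulcoord (n : ℕ) (j : Fin n) (p : SchwartzMap (Fin n → ℝ) ℂ) (x : Fin n → ℝ) :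
    SchwartzMap.pderivCLM ℝ (Pi.single j 1)
        (SchwartzMap.bilinLeftCLM (ContinuousLinearMap.mul ℝ ℂ) (coordC_temperate n j) p) x
      = SchwartzMap.pderivCLM ℝ (Pi.single j 1) p x * ((x j : ℝ) : ℂ) + p x := by
  rw [← partialDeriv1_eq, partialDeriv1]
  have hp := hasDerivAt_schwartz_update n j p x (x j)
  have hc : HasDerivAt (fun t : ℝ => ((t : ℝ) : ℂ)) 1 (x j) := by
    simpa using (hasDerivAt_id (x j)).ofReal_comp
  have hprod := hp.fun_mul hc
  have heq : (fun t : ℝ =>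
      SchwartzMap.bilinLeftCLM (ContinuousLinearMap.mul ℝ ℂ) (coordC_temperate n j) p
        (Function.update x j t))
      = fun t : ℝ => p (Function.update x j t) * ((t : ℝ) : ℂ) := by
    funext t
    rw [bilinX_apply, Function.update_self]
  rw [heq, hprod.deriv, Function.update_eq_self]
  simp

lemma schwartz_sum_apply {E : Type*} [NormedAddCommGroup E] [NormedSpace ℝ E]
    {ι : Type*} (s : Finset ι) (g : ι → SchwartzMap E ℂ) (x : E) :
    (∑ i ∈ s, g i) x = ∑ i ∈ s, g i x := by
  induction s using Finset.cons_induction with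
  | empty => simp
  | cons i s hi ih => rw [Finset.sum_cons, SchwartzMap.add_apply, ih, Finset.sum_cons]

noncomputable def pd (n : ℕ) (j : Fin n) :
    SchwartzMap (Fin n → ℝ) ℂ →L[ℂ] SchwartzMap (Fin n → ℝ) ℂ :=
  SchwartzMap.pderivCLM ℂ (Pi.single j 1)

noncomputable def xmul (n : ℕ) (j : Fin n) :
    SchwartzMap (Fin n → ℝ) ℂ →L[ℝ] SchwartzMap (Fin n → ℝ) ℂ :=
  SchwartzMap.bilinLeftCLM (ContinuousLinearMap.mul ℝ ℂ) (coordC_temperate n j)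

noncomputable def mconj (n : ℕ) (q p : SchwartzMap (Fin n → ℝ) ℂ) :
    SchwartzMap (Fin n → ℝ) ℂ :=
  SchwartzMap.bilinLeftCLM mulConjCLM (schwartz_temperate q) p

lemma mconj_apply (n : ℕ) (q p : SchwartzMap (Fin n → ℝ) ℂ) (x : Fin n → ℝ) :
    mconj n q p x = p x * (starRingEnd ℂ) (q x) := rfl

lemma xmul_apply (n : ℕ) (j : Fin n) (p : SchwartzMap (Fin n → ℝ) ℂ) (x : Fin n → ℝ) :
    xmul n j p x = p x * ((x j : ℝ) : ℂ) := rfl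

lemma pd_apply (n : ℕ) (j : Fin n) (g : SchwartzMap (Fin n → ℝ) ℂ) (x : Fin n → ℝ) :
    pd n j g x = fderiv ℝ (⇑g) x (Pi.single j 1) := rfl

lemma pd_mulconj (n : ℕ) (j : Fin n) (q p : SchwartzMap (Fin n → ℝ) ℂ) (x : Fin n → ℝ) :
    pd n j (mconj n q p) x
      = pd n j p x * (starRingEnd ℂ) (q x) + p x * (starRingEnd ℂ) (pd n j q x) :=
  Dj_mulconj n j p q x

lemma pd_mulcoord (n : ℕ) (j : Fin n) (p : SchwartzMap (Fin n → ℝ) ℂ) (x : Fin n → ℝ) :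
    pd n j (xmul n j p) x = pd n j p x * ((x j : ℝ) : ℂ) + p x :=
  Dj_mulcoord n j p x

lemma pd1_eq (n : ℕ) (j : Fin n) (g : SchwartzMap (Fin n → ℝ) ℂ) (x : Fin n → ℝ) :
    partialDeriv1 n j ⇑g x = pd n j g x := partialDeriv1_eq n j g x

lemma pd2_eq (n : ℕ) (j : Fin n) (g : SchwartzMap (Fin n → ℝ) ℂ) (x : Fin n → ℝ) :
    partialDeriv2 n j ⇑g x = pd n j (pd n j g) x := partialDeriv2_eq n j g x

lemma integral_pd (m : ℕ) (j : Fin (m+1)) (g : SchwartzMap (Fin (m+1) → ℝ) ℂ) :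
    ∫ x : Fin (m+1) → ℝ, pd (m+1) j g x = 0 := integral_pderiv_single m j g


/-- the lowest eigenspace of the Hamilton operator in the Schwartz space is
spanned by the Gaussian: if `H₀ f = −(n/2) f` then `f(x) = f(0) e^{−|x|²/2}`. -/
theorem hamOp_lowest_eigenspace (n : ℕ) (hn : 1 ≤ n) (f : SchwartzMap (Fin n → ℝ) ℂ)
    (h : ∀ x : Fin n → ℝ, hamOp n ⇑f x = -((n : ℂ) / 2) * f x) :
    ∀ x : Fin n → ℝ, f x = f 0 * Complex.exp (-(↑(∑ j, (x j) ^ 2) : ℂ) / 2) := by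
  obtain ⟨m, rfl⟩ : ∃ m, n = m + 1 := ⟨n - 1, (Nat.succ_pred_eq_of_pos hn).symm⟩
  have hsum : ∀ x : Fin (m+1) → ℝ, ∑ j, pd (m+1) j (pd (m+1) j f) x
      = ((∑ j, ((x j : ℝ) : ℂ) ^ 2) - ((m + 1 : ℕ) : ℂ)) * f x := by
    intro x
    have hx := h x
    rw [hamOp] at hx
    have h2 : ∑ j, (partialDeriv2 (m+1) j ⇑f x - ((x j : ℝ) : ℂ) ^ 2 * f x)
        = -(((m+1 : ℕ) : ℂ)) * f x := by
      push_cast at hx ⊢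
      linear_combination 2 * hx
    rw [Finset.sum_sub_distrib] at h2
    have h3 : ∑ j, partialDeriv2 (m+1) j ⇑f x = ∑ j, pd (m+1) j (pd (m+1) j f) x :=
      Finset.sum_congr rfl fun j _ => pd2_eq (m+1) j f x
    rw [h3, ← Finset.sum_mul] at h2
    linear_combination h2
  set u : SchwartzMap (Fin (m+1) → ℝ) ℂ := mconj (m+1) f f with hu
  set V : Fin (m+1) → SchwartzMap (Fin (m+1) → ℝ) ℂ :=
    fun j => (2⁻¹ : ℂ) • pd (m+1) j u + xmul (m+1) j u with hV
  set w : Fin (m+1) → SchwartzMap (Fin (m+1) → ℝ) ℂ :=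
    fun j => pd (m+1) j f + xmul (m+1) j f with hw
  set T : SchwartzMap (Fin (m+1) → ℝ) ℂ := ∑ j, pd (m+1) j (V j) with hT
  have hwx : ∀ (j : Fin (m+1)) (x : Fin (m+1) → ℝ),
      w j x = pd (m+1) j f x + f x * ((x j : ℝ) : ℂ) := by
    intro j x
    rw [hw]
    rw [SchwartzMap.add_apply, xmul_apply]
  have hDu' : ∀ j : Fin (m+1), pd (m+1) j u
      = mconj (m+1) f (pd (m+1) j f) + mconj (m+1) (pd (m+1) j f) f := by
    intro j
    apply SchwartzMap.ext; intro x
    rw [hu, pd_mulconj, SchwartzMap.add_apply, mconj_apply, mconj_apply]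
  have hkey : ∀ x, T x = ∑ j, w j x * (starRingEnd ℂ) (w j x) := by
    intro x
    rw [hT, schwartz_sum_apply]
    have hsub : ∀ j, pd (m+1) j (V j) x - w j x * (starRingEnd ℂ) (w j x)
        = (2⁻¹ : ℂ) * ((starRingEnd ℂ) (f x) * pd (m+1) j (pd (m+1) j f) x
            + f x * (starRingEnd ℂ) (pd (m+1) j (pd (m+1) j f) x))
          + f x * (starRingEnd ℂ) (f x)
          - ((x j : ℝ) : ℂ) ^ 2 * (f x * (starRingEnd ℂ) (f x)) := by
      intro j
      have e1 : pd (m+1) j (V j) x = (2⁻¹ : ℂ) * pd (m+1) j (pd (m+1) j u) x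
          + (pd (m+1) j u x * ((x j : ℝ) : ℂ) + u x) := by
        rw [hV]
        rw [map_add, _root_.map_smul, SchwartzMap.add_apply, SchwartzMap.smul_apply, pd_mulcoord]
        rw [smul_eq_mul]
      have e2 : pd (m+1) j (pd (m+1) j u) x
          = (pd (m+1) j (pd (m+1) j f) x * (starRingEnd ℂ) (f x)
              + pd (m+1) j f x * (starRingEnd ℂ) (pd (m+1) j f x))
            + (pd (m+1) j f x * (starRingEnd ℂ) (pd (m+1) j f x)
              + f x * (starRingEnd ℂ) (pd (m+1) j (pd (m+1) j f) x)) := by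
        rw [hDu' j, map_add, SchwartzMap.add_apply, pd_mulconj, pd_mulconj]
      have e3 : pd (m+1) j u x
          = pd (m+1) j f x * (starRingEnd ℂ) (f x) + f x * (starRingEnd ℂ) (pd (m+1) j f x) := by
        rw [hu, pd_mulconj]
      have e4 : u x = f x * (starRingEnd ℂ) (f x) := by rw [hu, mconj_apply]
      rw [e1, e2, e3, e4, hwx]
      rw [map_add, map_mul, Complex.conj_ofReal]
      ring
    have hsplit : ∑ j, (pd (m+1) j (V j) x - w j x * (starRingEnd ℂ) (w j x)) = 0 := by
      rw [Finset.sum_congr rfl fun j _ => hsub j]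
      have hA := hsum x
      have hAc : ∑ j, (starRingEnd ℂ) (pd (m+1) j (pd (m+1) j f) x)
          = ((∑ j, ((x j : ℝ) : ℂ) ^ 2) - ((m + 1 : ℕ) : ℂ)) * (starRingEnd ℂ) (f x) := by
        rw [← map_sum, hA, map_mul, map_sub, map_sum]
        simp [Complex.conj_ofReal]
      simp only [Finset.sum_sub_distrib, Finset.sum_add_distrib, ← Finset.mul_sum,
        ← Finset.sum_mul, Finset.sum_const, Finset.card_univ, Fintype.card_fin,
        nsmul_eq_mul, hA, hAc]
      push_cast
      ring
    rw [← sub_eq_zero, ← Finset.sum_sub_distrib]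
    exact hsplit
  have hT0 : ∫ x, T x = 0 := by
    rw [hT]
    rw [show (fun x => (∑ j, pd (m+1) j (V j)) x) = fun x => ∑ j, pd (m+1) j (V j) x from
      funext fun x => schwartz_sum_apply _ _ x]
    rw [integral_finset_sum _ fun j _ => ((pd (m+1) j (V j)).integrable (μ := volume))]
    exact Finset.sum_eq_zero fun j _ => integral_pd m j (V j)
  set s : (Fin (m+1) → ℝ) → ℝ := fun x => ∑ j, Complex.normSq (w j x) with hs
  have hTs : ∀ x, T x = ((s x : ℝ) : ℂ) := by
    intro x
    rw [hkey, hs]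
    push_cast [Complex.mul_conj]
    rfl
  have hs_cont : Continuous s := by
    rw [hs]
    exact continuous_finset_sum _ fun j _ => Complex.continuous_normSq.comp (w j).continuous
  have hs_int : Integrable s := by
    have heq : s = fun x => (T x).re := funext fun x => by rw [hTs]; simp
    rw [heq]
    simpa using (T.integrable (μ := volume)).re
  have hs0 : ∫ x, s x = 0 := by
    have hre := integral_re (T.integrable (μ := volume))
    rw [hT0] at hre
    simp only [map_zero] at hre
    rw [show (fun x => s x) = fun x => RCLike.re (T x) from funext fun x => by rw [hTs]; simp]
    exact hre
  have hae := (integral_eq_zero_iff_of_nonneg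
    (fun x => Finset.sum_nonneg fun j _ => Complex.normSq_nonneg _) hs_int).1 hs0
  have hszero : s = 0 := (Continuous.ae_eq_iff_eq volume hs_cont continuous_const).1 hae
  have hw0 : ∀ (j : Fin (m+1)) (x : Fin (m+1) → ℝ), w j x = 0 := by
    intro j x
    have hx0 : s x = 0 := congrFun hszero x
    have := (Finset.sum_eq_zero_iff_of_nonneg
      (fun j _ => Complex.normSq_nonneg (w j x))).1 hx0 j (Finset.mem_univ j)
    exact Complex.normSq_eq_zero.1 this
  have hfd : ∀ (j : Fin (m+1)) (y : Fin (m+1) → ℝ),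
      fderiv ℝ (⇑f) y (Pi.single j 1) = -(((y j : ℝ) : ℂ)) * f y := by
    intro j y
    have h0 := hw0 j y
    rw [hwx, pd_apply] at h0
    linear_combination h0
  intro x
  set R : ℝ := ∑ j, (x j) ^ 2 with hRdef
  have hvec : ∀ y : Fin (m+1) → ℝ, fderiv ℝ (⇑f) y x = ∑ j, (x j : ℂ) * (-(((y j : ℝ) : ℂ)) * f y) := by
    intro y
    conv_lhs => rw [← Finset.univ_sum_single x, map_sum]
    refine Finset.sum_congr rfl fun j _ => ?_
    have hsingle : (Pi.single j (x j) : Fin (m+1) → ℝ)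
        = (x j) • (Pi.single j 1 : Fin (m+1) → ℝ) := by
      funext i
      rcases eq_or_ne i j with rfl | hij
      · simp
      · simp [Pi.single_eq_of_ne hij]
    rw [hsingle, _root_.map_smul, hfd j y]
    simp [smul_eq_mul]
  have hcurve : ∀ t : ℝ, HasDerivAt (fun s : ℝ => f (s • x)) (-((t * R : ℝ) : ℂ) * f (t • x)) t := by
    intro t
    have hc : HasDerivAt (fun s : ℝ => s • x) x t := by
      simpa using (hasDerivAt_id t).smul_const x
    have h1 := (f.differentiableAt.hasFDerivAt (x := t • x)).comp_hasDerivAt t hc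
    have h2 : fderiv ℝ (⇑f) (t • x) x = -((t * R : ℝ) : ℂ) * f (t • x) := by
      rw [hvec (t • x)]
      have hterm : ∀ j : Fin (m+1), ((x j : ℝ) : ℂ) * (-((((t • x) j : ℝ) : ℂ)) * f (t • x))
          = -(((t : ℝ) : ℂ) * ((x j : ℝ) : ℂ) ^ 2) * f (t • x) := by
        intro j
        have hsm : (t • x) j = t * x j := rfl
        rw [hsm]
        push_cast
        ring
      rw [Finset.sum_congr rfl fun j _ => hterm j, ← Finset.sum_mul]
      congr 1
      rw [Finset.sum_neg_distrib, hRdef]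
      push_cast
      rw [Finset.mul_sum]
    rw [h2] at h1
    exact h1
  have hexp : ∀ t : ℝ, HasDerivAt (fun s : ℝ => Complex.exp (((s ^ 2 * R / 2 : ℝ) : ℂ)))
      (((t * R : ℝ) : ℂ) * Complex.exp (((t ^ 2 * R / 2 : ℝ) : ℂ))) t := by
    intro t
    have ha : HasDerivAt (fun s : ℝ => s ^ 2 * R / 2) (t * R) t := by
      have h' := (hasDerivAt_pow 2 t).mul_const (R / 2)
      have heq2 : (fun s : ℝ => s ^ 2 * (R / 2)) = fun s : ℝ => s ^ 2 * R / 2 := by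
        funext s; ring
      rw [heq2] at h'
      exact h'.congr_deriv (by push_cast; ring)
    have hb := (ha.ofReal_comp).cexp
    convert hb using 1
    ring
  set φ : ℝ → ℂ := fun t => f (t • x) * Complex.exp (((t ^ 2 * R / 2 : ℝ) : ℂ)) with hφdef
  have hφ : ∀ t, HasDerivAt φ 0 t := by
    intro t
    have := (hcurve t).fun_mul (hexp t)
    exact this.congr_deriv (by ring)
  have hconst : φ 1 = φ 0 :=
    is_const_of_deriv_eq_zero (fun t => (hφ t).differentiableAt) (fun t => (hφ t).deriv) 1 0
  have h10 : f x * Complex.exp (((R / 2 : ℝ) : ℂ)) = f 0 := by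
    have h1 : φ 1 = f x * Complex.exp (((R / 2 : ℝ) : ℂ)) := by
      rw [hφdef]
      norm_num
    have h0 : φ 0 = f 0 := by
      rw [hφdef]
      norm_num
    rw [← h1, hconst, h0]
  have hEe : Complex.exp (-(↑(∑ j, (x j) ^ 2) : ℂ) / 2) = (Complex.exp (((R / 2 : ℝ) : ℂ)))⁻¹ := by
    rw [← Complex.exp_neg]
    congr 1
    rw [hRdef]
    push_cast
    ring
  rw [hEe, ← h10]
  field_simp
end

section
/- Let n ≥ 1, let f : ℝⁿ → ℂ be a Schwartz function, and let v ∈ ℝ^(2n). Then H₀(σ(v)f) = σ(v)(H₀ f) + i·σ(J₀ v) f; that is, the commutator of the Hamilton operator with the symplectic Clifford multiplication by v is i times the symplectic Clifford multiplication by J₀v. -/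
open scoped ContDiff

open MeasureTheory

variable {n : ℕ}

lemma update_eq' (x : Fin n → ℝ) (j : Fin n) (t : ℝ) :
    Function.update x j t = x + (t - x j) • (Pi.single j 1 : Fin n → ℝ) := by
  funext i
  rcases eq_or_ne i j with rfl | h
  · simp
  · simp [Function.update_apply, h, Pi.single_apply]

lemma hasDerivAt_slice {f : (Fin n → ℝ) → ℂ} (hf : Differentiable ℝ f)
    (x : Fin n → ℝ) (k : Fin n) (s : ℝ) :
    HasDerivAt (fun t => f (Function.update x k t))
      (fderiv ℝ f (Function.update x k s) (Pi.single k 1)) s := by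
  have h1 : HasDerivAt (fun t : ℝ => Function.update x k t) (Pi.single k 1) s := by
    have h2 : HasDerivAt (fun t : ℝ => x + (t - x k) • (Pi.single k 1 : Fin n → ℝ))
        ((1:ℝ) • (Pi.single k 1 : Fin n → ℝ)) s :=
      ((((hasDerivAt_id s).sub_const (x k))).smul_const _).const_add x
    simp only [one_smul] at h2
    simpa only [update_eq'] using h2
  exact (hf _).hasFDerivAt.comp_hasDerivAt s h1

noncomputable def Dv (f : (Fin n → ℝ) → ℂ) (j : Fin n) : (Fin n → ℝ) → ℂ :=
  fun y => fderiv ℝ f y (Pi.single j 1)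

lemma Dv_contDiff {f : (Fin n → ℝ) → ℂ} (hf : ContDiff ℝ ∞ f) (j : Fin n) :
    ContDiff ℝ ∞ (Dv f j) :=
  (hf.fderiv_right (by simp)).clm_apply contDiff_const

lemma pd1_eq_s12 {f : (Fin n → ℝ) → ℂ} (hf : Differentiable ℝ f) (j : Fin n) (x : Fin n → ℝ) :
    partialDeriv1 n j f x = Dv f j x := by
  rw [partialDeriv1, (hasDerivAt_slice hf x j (x j)).deriv, Function.update_eq_self]
  rfl

lemma pd2_eq_s12 {f : (Fin n → ℝ) → ℂ} (hf : ContDiff ℝ ∞ f) (j : Fin n) (x : Fin n → ℝ) :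
    partialDeriv2 n j f x = Dv (Dv f j) j x := by
  rw [partialDeriv2, iteratedDeriv_succ, iteratedDeriv_one]
  have h1 : deriv (fun t => f (Function.update x j t))
      = fun s => Dv f j (Function.update x j s) := by
    funext s
    exact (hasDerivAt_slice (hf.differentiable (by simp)) x j s).deriv
  rw [h1, (hasDerivAt_slice ((Dv_contDiff hf j).differentiable (by simp)) x j (x j)).deriv,
    Function.update_eq_self]
  rfl

lemma Dv_swap {f : (Fin n → ℝ) → ℂ} (hf : ContDiff ℝ ∞ f) (j k : Fin n) (x : Fin n → ℝ) :
    Dv (Dv f j) k x = Dv (Dv f k) j x := by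
  have hd : Differentiable ℝ (fderiv ℝ f) := (hf.fderiv_right (m := ∞) (by simp)).differentiable (by simp)
  have key : ∀ (u w : Fin n → ℝ),
      fderiv ℝ (fun y => fderiv ℝ f y u) x w = fderiv ℝ (fderiv ℝ f) x w u := by
    intro u w
    rw [fderiv_clm_apply (𝕜 := ℝ) (hd x) (differentiableAt_const u)]
    simp
  show fderiv ℝ (fun y => fderiv ℝ f y (Pi.single j 1)) x (Pi.single k 1)
    = fderiv ℝ (fun y => fderiv ℝ f y (Pi.single k 1)) x (Pi.single j 1)
  rw [key, key]
  exact (hf.contDiffAt.isSymmSndFDerivAt (by simpa [minSmoothness_of_isRCLikeNormedField] using (WithTop.coe_le_coe.mpr le_top : ((2 : ℕ∞) : WithTop ℕ∞) ≤ ∞))).eq _ _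

lemma hasDerivAt_linPart (a x : Fin n → ℝ) (k : Fin n) (s : ℝ) :
    HasDerivAt (fun t => ∑ j, a j * Function.update x k t j) (a k) s := by
  have h : ∀ j ∈ Finset.univ, HasDerivAt (fun t => a j * Function.update x k t j)
      ((fun j => if j = k then a k else 0) j) s := by
    intro j _
    rcases eq_or_ne j k with rfl | hjk
    · simp only [Function.update_self, if_pos rfl]
      simpa using (hasDerivAt_id s).const_mul (a j)
    · simp only [Function.update_apply, if_neg hjk]
      exact hasDerivAt_const s _
  have := HasDerivAt.fun_sum h
  simpa using this

lemma hasDerivAt_sliceD {f : (Fin n → ℝ) → ℂ} (hf : Differentiable ℝ f)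
    (x : Fin n → ℝ) (k : Fin n) (s : ℝ) :
    HasDerivAt (fun t => f (Function.update x k t)) (Dv f k (Function.update x k s)) s :=
  hasDerivAt_slice hf x k s

lemma sclMul_eq (v : (Fin n → ℝ) × (Fin n → ℝ)) {f : (Fin n → ℝ) → ℂ}
    (hf : Differentiable ℝ f) :
    sclMul n v f = fun y =>
      Complex.I * (↑(∑ j, v.1 j * y j) : ℂ) * f y + ∑ j, (↑(v.2 j) : ℂ) * Dv f j y := by
  funext y
  rw [sclMul]
  congr 1
  exact Finset.sum_congr rfl fun j _ => by rw [pd1_eq_s12 hf]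

lemma hamOp_eq {f : (Fin n → ℝ) → ℂ} (hf : ContDiff ℝ ∞ f) :
    hamOp n f = fun y => (1 / 2 : ℂ) * ∑ k, (Dv (Dv f k) k y - (↑(y k) : ℂ) ^ 2 * f y) := by
  funext y
  rw [hamOp]
  congr 1
  exact Finset.sum_congr rfl fun k _ => by rw [pd2_eq_s12 hf]

lemma pd2_sclMul (v : (Fin n → ℝ) × (Fin n → ℝ)) {f : (Fin n → ℝ) → ℂ}
    (hf : ContDiff ℝ ∞ f) (k : Fin n) (x : Fin n → ℝ) :
    partialDeriv2 n k (sclMul n v f) x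
      = 2 * Complex.I * (↑(v.1 k) : ℂ) * Dv f k x
        + Complex.I * (↑(∑ j, v.1 j * x j) : ℂ) * Dv (Dv f k) k x
        + ∑ j, (↑(v.2 j) : ℂ) * Dv (Dv (Dv f j) k) k x := by
  have hfd : Differentiable ℝ f := hf.differentiable (by simp)
  have hD1d : ∀ j, Differentiable ℝ (Dv f j) := fun j => (Dv_contDiff hf j).differentiable (by simp)
  have hD2d : ∀ j l, Differentiable ℝ (Dv (Dv f j) l) := fun j l =>
    (Dv_contDiff (Dv_contDiff hf j) l).differentiable (by simp)
  rw [sclMul_eq v hfd, partialDeriv2, iteratedDeriv_succ, iteratedDeriv_one]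
  set u : ℝ → (Fin n → ℝ) := fun t => Function.update x k t with hu
  have hstep1 : ∀ s : ℝ, HasDerivAt
      (fun t => Complex.I * (↑(∑ j, v.1 j * u t j) : ℂ) * f (u t)
        + ∑ j, (↑(v.2 j) : ℂ) * Dv f j (u t))
      (Complex.I * (↑(v.1 k) : ℂ) * f (u s)
        + Complex.I * (↑(∑ j, v.1 j * u s j) : ℂ) * Dv f k (u s)
        + ∑ j, (↑(v.2 j) : ℂ) * Dv (Dv f j) k (u s)) s := by
    intro s
    have h1 : HasDerivAt (fun t => Complex.I * (↑(∑ j, v.1 j * u t j) : ℂ))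
        (Complex.I * (↑(v.1 k) : ℂ)) s :=
      ((hasDerivAt_linPart v.1 x k s).ofReal_comp).const_mul Complex.I
    have hF : HasDerivAt (fun t => f (u t)) (Dv f k (u s)) s := hasDerivAt_sliceD hfd x k s
    have hA := h1.mul hF
    have hB : HasDerivAt (fun t => ∑ j, (↑(v.2 j) : ℂ) * Dv f j (u t))
        (∑ j, (↑(v.2 j) : ℂ) * Dv (Dv f j) k (u s)) s :=
      HasDerivAt.fun_sum fun j _ => (hasDerivAt_sliceD (hD1d j) x k s).const_mul _
    exact hA.add hB
  have hd1 : (deriv fun t => Complex.I * (↑(∑ j, v.1 j * u t j) : ℂ) * f (u t)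
      + ∑ j, (↑(v.2 j) : ℂ) * Dv f j (u t))
      = fun s => Complex.I * (↑(v.1 k) : ℂ) * f (u s)
        + Complex.I * (↑(∑ j, v.1 j * u s j) : ℂ) * Dv f k (u s)
        + ∑ j, (↑(v.2 j) : ℂ) * Dv (Dv f j) k (u s) := funext fun s => (hstep1 s).deriv
  rw [hd1]
  have hstep2 : HasDerivAt
      (fun s => Complex.I * (↑(v.1 k) : ℂ) * f (u s)
        + Complex.I * (↑(∑ j, v.1 j * u s j) : ℂ) * Dv f k (u s)
        + ∑ j, (↑(v.2 j) : ℂ) * Dv (Dv f j) k (u s))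
      (Complex.I * (↑(v.1 k) : ℂ) * Dv f k (u (x k))
        + (Complex.I * (↑(v.1 k) : ℂ) * Dv f k (u (x k))
          + Complex.I * (↑(∑ j, v.1 j * u (x k) j) : ℂ) * Dv (Dv f k) k (u (x k)))
        + ∑ j, (↑(v.2 j) : ℂ) * Dv (Dv (Dv f j) k) k (u (x k))) (x k) := by
    have h1 : HasDerivAt (fun s => Complex.I * (↑(v.1 k) : ℂ) * f (u s))
        (Complex.I * (↑(v.1 k) : ℂ) * Dv f k (u (x k))) (x k) :=
      (hasDerivAt_sliceD hfd x k (x k)).const_mul _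
    have h2a : HasDerivAt (fun s => Complex.I * (↑(∑ j, v.1 j * u s j) : ℂ))
        (Complex.I * (↑(v.1 k) : ℂ)) (x k) :=
      ((hasDerivAt_linPart v.1 x k (x k)).ofReal_comp).const_mul Complex.I
    have h2b : HasDerivAt (fun s => Dv f k (u s)) (Dv (Dv f k) k (u (x k))) (x k) :=
      hasDerivAt_sliceD (hD1d k) x k (x k)
    have h3 : HasDerivAt (fun s => ∑ j, (↑(v.2 j) : ℂ) * Dv (Dv f j) k (u s))
        (∑ j, (↑(v.2 j) : ℂ) * Dv (Dv (Dv f j) k) k (u (x k))) (x k) :=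
      HasDerivAt.fun_sum fun j _ => (hasDerivAt_sliceD (hD2d j k) x k (x k)).const_mul _
    exact (h1.add (h2a.mul h2b)).add h3
  rw [hstep2.deriv]
  have hux : u (x k) = x := Function.update_eq_self k x
  rw [hux]
  ring

lemma pd1_hamOp {f : (Fin n → ℝ) → ℂ} (hf : ContDiff ℝ ∞ f) (j : Fin n) (x : Fin n → ℝ) :
    partialDeriv1 n j (hamOp n f) x
      = (1 / 2 : ℂ) * ∑ k, (Dv (Dv (Dv f k) k) j x
          - ((if k = j then 2 * (↑(x j) : ℂ) else 0) * f x + (↑(x k) : ℂ) ^ 2 * Dv f j x)) := by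
  have hfd : Differentiable ℝ f := hf.differentiable (by simp)
  have hD2d : ∀ k l, Differentiable ℝ (Dv (Dv f k) l) := fun k l =>
    (Dv_contDiff (Dv_contDiff hf k) l).differentiable (by simp)
  rw [hamOp_eq hf, partialDeriv1]
  set u : ℝ → (Fin n → ℝ) := fun t => Function.update x j t with hu
  have hder : HasDerivAt
      (fun t => (1 / 2 : ℂ) * ∑ k, (Dv (Dv f k) k (u t) - (↑(u t k) : ℂ) ^ 2 * f (u t)))
      ((1 / 2 : ℂ) * ∑ k, (Dv (Dv (Dv f k) k) j (u (x j))
        - ((if k = j then 2 * (↑(x j) : ℂ) else 0) * f (u (x j))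
            + (↑(u (x j) k) : ℂ) ^ 2 * Dv f j (u (x j))))) (x j) := by
    refine HasDerivAt.const_mul _ (HasDerivAt.fun_sum fun k _ => ?_)
    have hk1 : HasDerivAt (fun t => Dv (Dv f k) k (u t))
        (Dv (Dv (Dv f k) k) j (u (x j))) (x j) := hasDerivAt_sliceD (hD2d k k) x j (x j)
    have hk2 : HasDerivAt (fun t => ((u t k : ℝ) : ℂ) ^ 2)
        (if k = j then 2 * ((x j : ℝ) : ℂ) else 0) (x j) := by
      rcases eq_or_ne k j with rfl | hkj
    
      · simp only [hu, Function.update_self, if_pos rfl]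
        have h := (hasDerivAt_id (x k)).ofReal_comp
        have := HasDerivAt.fun_mul h h
        simpa [pow_two, two_mul] using this
      · simp only [hu, Function.update_apply, if_neg hkj]
        exact hasDerivAt_const _ _
    have hk3 : HasDerivAt (fun t => f (u t)) (Dv f j (u (x j))) (x j) :=
      hasDerivAt_sliceD hfd x j (x j)
    exact hk1.sub (hk2.mul hk3)
  rw [hder.deriv]
  have hux : u (x j) = x := Function.update_eq_self j x
  rw [hux]
lemma final_algebra (n : ℕ) (a b xr : Fin n → ℝ) (Fx : ℂ) (D DD : Fin n → ℂ)
    (T : Fin n → Fin n → ℂ) :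
    (1/2 : ℂ) * ∑ k, (2 * Complex.I * ↑(a k) * D k
        + Complex.I * (↑(∑ j, a j * xr j) : ℂ) * DD k
        + ∑ j, (↑(b j) : ℂ) * T j k
      - ↑(xr k) ^ 2 * (Complex.I * (↑(∑ j, a j * xr j) : ℂ) * Fx + ∑ j, (↑(b j):ℂ) * D j))
    = (Complex.I * (↑(∑ j, a j * xr j):ℂ) * ((1/2:ℂ) * ∑ k, (DD k - ↑(xr k) ^ 2 * Fx))
        + ∑ j, (↑(b j):ℂ) * ((1/2 : ℂ) * ∑ k, (T j k
            - ((if k = j then 2 * (↑(xr j):ℂ) else 0) * Fx + ↑(xr k) ^ 2 * D j))))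
      + Complex.I * (Complex.I * (↑(∑ j, -b j * xr j):ℂ) * Fx + ∑ j, (↑(a j):ℂ) * D j) := by
  set C : ℂ := (↑(∑ j, a j * xr j) : ℂ) with hC
  set SaD : ℂ := ∑ j, (↑(a j):ℂ) * D j with hSaD
  set SDD : ℂ := ∑ k, DD k with hSDD
  set Sx2 : ℂ := ∑ k, (↑(xr k):ℂ)^2 with hSx2
  set SbD : ℂ := ∑ j, (↑(b j):ℂ) * D j with hSbD
  set Sbx : ℂ := ∑ j, (↑(b j):ℂ) * (↑(xr j):ℂ) with hSbx
  set ST : ℂ := ∑ j, (↑(b j):ℂ) * ∑ k, T j k with hST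
  -- LHS sum
  have hA : ∑ k, (2 * Complex.I * ↑(a k) * D k + Complex.I * C * DD k
        + ∑ j, (↑(b j) : ℂ) * T j k
        - ↑(xr k) ^ 2 * (Complex.I * C * Fx + ∑ j, (↑(b j):ℂ) * D j))
      = 2 * Complex.I * SaD + Complex.I * C * SDD + ST
        - Complex.I * C * Fx * Sx2 - SbD * Sx2 := by
    rw [Finset.sum_sub_distrib, Finset.sum_add_distrib, Finset.sum_add_distrib]
    have e1 : ∑ k, 2 * Complex.I * (↑(a k):ℂ) * D k = 2 * Complex.I * SaD := by
      rw [hSaD, Finset.mul_sum]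
      exact Finset.sum_congr rfl fun k _ => by ring
    have e2 : ∑ k, Complex.I * C * DD k = Complex.I * C * SDD := by
      rw [hSDD, Finset.mul_sum]
    have e3 : ∑ k, ∑ j, (↑(b j) : ℂ) * T j k = ST := by
      rw [Finset.sum_comm, hST]
      exact Finset.sum_congr rfl fun j _ => by rw [Finset.mul_sum]
    have e4 : ∑ k, (↑(xr k):ℂ) ^ 2 * (Complex.I * C * Fx + ∑ j, (↑(b j):ℂ) * D j)
        = Complex.I * C * Fx * Sx2 + SbD * Sx2 := by
      rw [← hSbD, ← Finset.sum_mul, hSx2]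
      ring
    rw [e1, e2, e3, e4]
    ring
  rw [hA]
  -- RHS first term
  have hB : ∑ k, (DD k - (↑(xr k):ℂ) ^ 2 * Fx) = SDD - Sx2 * Fx := by
    rw [Finset.sum_sub_distrib, hSDD, hSx2, Finset.sum_mul]
  rw [hB]
  -- RHS second term
  have hC2 : ∀ j, ∑ k, (T j k
        - ((if k = j then 2 * (↑(xr j):ℂ) else 0) * Fx + (↑(xr k):ℂ) ^ 2 * D j))
      = (∑ k, T j k) - 2 * (↑(xr j):ℂ) * Fx - Sx2 * D j := by
    intro j
    rw [Finset.sum_sub_distrib, Finset.sum_add_distrib]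
    have e5 : ∑ k, (if k = j then 2 * (↑(xr j):ℂ) else 0) * Fx = 2 * (↑(xr j):ℂ) * Fx := by
      simp [ite_mul]
    have e6 : ∑ k, (↑(xr k):ℂ) ^ 2 * D j = Sx2 * D j := by
      rw [hSx2, Finset.sum_mul]
    rw [e5, e6]
    ring
  have hC3 : ∑ j, (↑(b j):ℂ) * ((1/2 : ℂ) * ((∑ k, T j k) - 2 * (↑(xr j):ℂ) * Fx - Sx2 * D j))
      = (1/2 : ℂ) * ST - Fx * Sbx - (1/2 : ℂ) * Sx2 * SbD := by
    have : ∀ j, (↑(b j):ℂ) * ((1/2 : ℂ) * ((∑ k, T j k) - 2 * (↑(xr j):ℂ) * Fx - Sx2 * D j))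
        = (1/2 : ℂ) * ((↑(b j):ℂ) * ∑ k, T j k) - Fx * ((↑(b j):ℂ) * (↑(xr j):ℂ))
          - (1/2 : ℂ) * Sx2 * ((↑(b j):ℂ) * D j) := fun j => by ring
    rw [Finset.sum_congr rfl fun j _ => this j, Finset.sum_sub_distrib, Finset.sum_sub_distrib,
      ← Finset.mul_sum, ← Finset.mul_sum, ← Finset.mul_sum, ← hST, ← hSbx, ← hSbD]
  have hrw : ∑ j, (↑(b j):ℂ) * ((1/2 : ℂ) * ∑ k, (T j k
        - ((if k = j then 2 * (↑(xr j):ℂ) else 0) * Fx + (↑(xr k):ℂ) ^ 2 * D j)))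
      = (1/2 : ℂ) * ST - Fx * Sbx - (1/2 : ℂ) * Sx2 * SbD := by
    rw [Finset.sum_congr rfl fun j _ => by rw [hC2 j], hC3]
  rw [hrw]
  -- RHS third term
  have hD : (↑(∑ j, -b j * xr j) : ℂ) = -Sbx := by
    rw [hSbx]
    push_cast
    rw [← Finset.sum_neg_distrib]
    exact Finset.sum_congr rfl fun j _ => by ring
  rw [hD]
  have hI : Complex.I * Complex.I = -1 := Complex.I_mul_I
  linear_combination (Sbx * Fx) * hI

lemma triple_swap {n : ℕ} {f : (Fin n → ℝ) → ℂ} (hf : ContDiff ℝ ∞ f) (j k : Fin n) (x : Fin n → ℝ) :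
    Dv (Dv (Dv f j) k) k x = Dv (Dv (Dv f k) k) j x := by
  have h1 : Dv (Dv f j) k = Dv (Dv f k) j := funext fun y => Dv_swap hf j k y
  rw [h1]
  exact Dv_swap (Dv_contDiff hf k) j k x

/-- `H₀(σ(v)f) = σ(v)(H₀ f) + i σ(J₀ v) f`. -/
theorem hamOp_sclMul_commutator (n : ℕ) (hn : 1 ≤ n) (f : SchwartzMap (Fin n → ℝ) ℂ)
    (v : (Fin n → ℝ) × (Fin n → ℝ)) (x : Fin n → ℝ) :
    hamOp n (sclMul n v ⇑f) x
      = sclMul n v (hamOp n ⇑f) x + Complex.I * sclMul n (J0 n v) ⇑f x := by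
  have hF : ContDiff ℝ ∞ (⇑f) := f.smooth'
  have hfd : Differentiable ℝ (⇑f) := hF.differentiable (by simp)
  have hval : sclMul n v ⇑f x
      = Complex.I * (↑(∑ j, v.1 j * x j) : ℂ) * f x + ∑ j, (↑(v.2 j) : ℂ) * Dv (⇑f) j x :=
    congrFun (sclMul_eq v hfd) x
  have hHval : hamOp n ⇑f x
      = (1 / 2 : ℂ) * ∑ k, (Dv (Dv (⇑f) k) k x - (↑(x k) : ℂ) ^ 2 * f x) :=
    congrFun (hamOp_eq hF) x
  rw [hamOp]
  have hsum : ∑ k, (partialDeriv2 n k (sclMul n v ⇑f) x - (↑(x k) : ℂ) ^ 2 * sclMul n v ⇑f x)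
      = ∑ k, (2 * Complex.I * (↑(v.1 k) : ℂ) * Dv (⇑f) k x
          + Complex.I * (↑(∑ j, v.1 j * x j) : ℂ) * Dv (Dv (⇑f) k) k x
          + ∑ j, (↑(v.2 j) : ℂ) * Dv (Dv (Dv (⇑f) k) k) j x
          - (↑(x k) : ℂ) ^ 2 * (Complex.I * (↑(∑ j, v.1 j * x j) : ℂ) * f x
              + ∑ j, (↑(v.2 j) : ℂ) * Dv (⇑f) j x)) := by
    refine Finset.sum_congr rfl fun k _ => ?_
    have hT : ∑ j, (↑(v.2 j) : ℂ) * Dv (Dv (Dv (⇑f) j) k) k x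
        = ∑ j, (↑(v.2 j) : ℂ) * Dv (Dv (Dv (⇑f) k) k) j x :=
      Finset.sum_congr rfl fun j _ => by rw [triple_swap hF j k x]
    rw [pd2_sclMul v hF k x, hT, hval]
  rw [hsum, sclMul, sclMul, hHval]
  have h5 : ∑ j, (↑(v.2 j) : ℂ) * partialDeriv1 n j (hamOp n ⇑f) x
      = ∑ j, (↑(v.2 j) : ℂ) * ((1 / 2 : ℂ) * ∑ k, (Dv (Dv (Dv (⇑f) k) k) j x
          - ((if k = j then 2 * (↑(x j) : ℂ) else 0) * f x
              + (↑(x k) : ℂ) ^ 2 * Dv (⇑f) j x))) :=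
    Finset.sum_congr rfl fun j _ => by rw [pd1_hamOp hF j x]
  have h6 : ∑ j, (↑((J0 n v).2 j) : ℂ) * partialDeriv1 n j ⇑f x
      = ∑ j, (↑(v.1 j) : ℂ) * Dv (⇑f) j x :=
    Finset.sum_congr rfl fun j _ => by rw [pd1_eq_s12 hfd j x]; rfl
  rw [h5, h6]
  have h7 : (∑ j, (J0 n v).1 j * x j) = ∑ j, -v.2 j * x j := by simp [J0]
  rw [h7]
  exact final_algebra n v.1 v.2 x (f x) (fun j => Dv (⇑f) j x) (fun k => Dv (Dv (⇑f) k) k x)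
    (fun j k => Dv (Dv (Dv (⇑f) k) k) j x)
end
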